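/- arXiv:2204.08581 — 7 statements merged into one kernel-verified Lean document; each statement's English description precedes it below -/
import Mathlib

section
/- Let N ∈ ℕ, parameters γ ≥ 0, κ ∈ (0,1], η > 0, α > 0, and initial values c₀, p₀, d₀ ∈ ℝ, X₀ > 0. Let (u_n)_{n=1,...,N} be nonnegative real numbers (random or deterministic) with Σ_{n=1}^N u_n = X₀, and set X_n := X₀ − Σ_{j=1}^n u_j (so X_N = 0). Let (P_n)_{n=0,...,N} be any real sequence with P₀ = p₀ and increments ΔP_n := P_n − P_{n−1}, let (ε_n)_{n=1,...,N} be real numbers, define D₀ := d₀ and D_n := (1−κ)D_{n−1} + η u_n^α + ε_n, set M_n := P_n + γ Σ_{j=1}^n u_j (M₀ := P₀), and define the cash balance C₀ := c₀, C_n := C_{n−1} − ((M_{n−1} + (1−κ)D_{n−1} + M_n − ΔP_n + D_n − ε_n)/2)·u_n. Then the terminal cash position satisfies C_N = c₀ − (p₀ + (γ/2)X₀)·X₀ − Σ_{n=1}^{N−1} X_n ΔP_n − Σ_{n=1}^N ((1−κ)D_{n−1} + (η/2)u_n^α)·u_n. -/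
open Finset

private lemma abel_aux (m : ℕ) (P X : ℕ → ℝ) :
    ∑ i ∈ range (m + 1), P i * (X i - X (i + 1))
      = P 0 * X 0 - P m * X (m + 1) + ∑ i ∈ range m, X (i + 1) * (P (i + 1) - P i) := by
  induction m with
  | zero => simp; ring
  | succ m ih => rw [sum_range_succ, ih, sum_range_succ]; ring

private lemma icc_to_range (n : ℕ) (g : ℕ → ℝ) :
    ∑ k ∈ Finset.Icc 1 n, g k = ∑ i ∈ Finset.range n, g (i + 1) := by
  induction n with
  | zero => simp
  | succ n ih => rw [Finset.sum_Icc_succ_top (by omega), Finset.sum_range_succ, ih]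

/-- **Terminal cash position of a buying program** (Lemma 2.1).
In the discrete-time optimal execution model with permanent impact `γ`,
resilience `κ`, instantaneous impact `η` and power price impact exponent `α`,
the terminal cash position of a buying schedule `(u n)` with `∑ u n = X₀`
(so that the remaining inventory `X N = 0`) is given by the stated formula. -/
theorem terminal_cash_position
    (N : ℕ) (γ κ η α : ℝ) (hγ : 0 ≤ γ) (hκ0 : 0 < κ) (hκ1 : κ ≤ 1)
    (hη : 0 < η) (hα : 0 < α)
    (c₀ p₀ d₀ X₀ : ℝ) (hX₀ : 0 < X₀)
    (u : ℕ → ℝ) (hu : ∀ n ∈ Finset.Icc 1 N, 0 ≤ u n)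
    (husum : ∑ n ∈ Finset.Icc 1 N, u n = X₀)
    (X : ℕ → ℝ) (hX : ∀ n, X n = X₀ - ∑ j ∈ Finset.Icc 1 n, u j)
    (P : ℕ → ℝ) (hP0 : P 0 = p₀)
    (ε : ℕ → ℝ)
    (D : ℕ → ℝ) (hD0 : D 0 = d₀)
    (hD : ∀ n ∈ Finset.Icc 1 N, D n = (1 - κ) * D (n - 1) + η * u n ^ α + ε n)
    (M : ℕ → ℝ) (hM0 : M 0 = P 0)
    (hM : ∀ n ∈ Finset.Icc 1 N, M n = P n + γ * ∑ j ∈ Finset.Icc 1 n, u j)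
    (C : ℕ → ℝ) (hC0 : C 0 = c₀)
    (hC : ∀ n ∈ Finset.Icc 1 N, C n = C (n - 1) -
      ((M (n - 1) + (1 - κ) * D (n - 1) + M n - (P n - P (n - 1)) + D n - ε n) / 2) * u n) :
    C N = c₀ - (p₀ + γ / 2 * X₀) * X₀
      - ∑ n ∈ Finset.Icc 1 (N - 1), X n * (P n - P (n - 1))
      - ∑ n ∈ Finset.Icc 1 N, ((1 - κ) * D (n - 1) + η / 2 * u n ^ α) * u n := by
  -- abbreviation for cumulative purchases
  set S : ℕ → ℝ := fun n => ∑ j ∈ Finset.Icc 1 n, u j with hSdef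
  have hN : 1 ≤ N := by
    by_contra h
    have : N = 0 := by omega
    subst this
    simp [hSdef] at husum
    linarith
  have hS0 : S 0 = 0 := by simp [hSdef]
  have hSN : S N = X₀ := husum
  have hXN : X N = 0 := by rw [hX]; simp [hSN.symm, hSdef]
  have hSstep : ∀ k : ℕ, S (k + 1) = S k + u (k + 1) := by
    intro k
    simp only [hSdef]
    rw [Finset.sum_Icc_succ_top (by omega)]
  -- the per-step cost
  set f : ℕ → ℝ := fun n =>
    ((M (n - 1) + (1 - κ) * D (n - 1) + M n - (P n - P (n - 1)) + D n - ε n) / 2) * u n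
    with hfdef
  -- unroll the recursion
  have hCn : ∀ n, n ≤ N → C n = c₀ - ∑ k ∈ Icc 1 n, f k := by
    intro n
    induction n with
    | zero => intro _; simp [hC0]
    | succ k ih =>
      intro h
      have hmem : k + 1 ∈ Finset.Icc 1 N := by simp; omega
      rw [hC (k + 1) hmem, Finset.sum_Icc_succ_top (by omega)]
      simp only [Nat.add_sub_cancel]
      rw [ih (by omega)]
      simp only [hfdef]
      have e : k + 1 - 1 = k := by omega
      rw [e]
      ring
  rw [hCn N le_rfl]
  -- M extended formula
  have hM' : ∀ n, n ≤ N → M n = P n + γ * S n := by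
    intro n hn
    rcases Nat.eq_zero_or_pos n with h | h
    · subst h; rw [hM0, hS0]; ring
    · exact hM n (by simp; omega)
  -- rewrite each summand
  have hf : ∀ n ∈ Finset.Icc 1 N, f n =
      P (n - 1) * (X (n - 1) - X n) + γ / 2 * ((S n) ^ 2 - (S (n - 1)) ^ 2)
        + ((1 - κ) * D (n - 1) + η / 2 * u n ^ α) * u n := by
    intro n hn
    simp only [Finset.mem_Icc] at hn
    obtain ⟨k, rfl⟩ : ∃ k, n = k + 1 := ⟨n - 1, by omega⟩
    have hk1 : (k + 1 : ℕ) - 1 = k := by omega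
    have hu' : u (k + 1) = S (k + 1) - S k := by rw [hSstep]; ring
    have hXu : X k - X (k + 1) = u (k + 1) := by
      rw [hX, hX, hu']; ring
    simp only [hfdef, hk1]
    rw [hM' (k + 1) (by omega), hM' k (by omega), hD (k + 1) (by simp; omega), hk1]
    rw [← hXu]
    rw [hXu, hu']
    ring
  rw [Finset.sum_congr rfl hf]
  rw [Finset.sum_add_distrib, Finset.sum_add_distrib]
  -- telescoping square sum
  have htel : ∑ n ∈ Finset.Icc 1 N, γ / 2 * ((S n) ^ 2 - (S (n - 1)) ^ 2)
      = γ / 2 * X₀ ^ 2 := by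
    rw [← Finset.mul_sum]
    rw [icc_to_range N (fun n => (S n) ^ 2 - (S (n - 1)) ^ 2)]
    simp only [Nat.add_sub_cancel]
    rw [ Finset.sum_range_sub (fun i => (S i) ^ 2), hSN, hS0]
    ring
  rw [htel]
  -- Abel summation
  have habel : ∑ n ∈ Finset.Icc 1 N, P (n - 1) * (X (n - 1) - X n)
      = p₀ * X₀ + ∑ n ∈ Finset.Icc 1 (N - 1), X n * (P n - P (n - 1)) := by
    obtain ⟨m, rfl⟩ : ∃ m, N = m + 1 := ⟨N - 1, by omega⟩
    have h1 : ∑ n ∈ Finset.Icc 1 (m + 1), P (n - 1) * (X (n - 1) - X n)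
        = ∑ i ∈ Finset.range (m + 1), P i * (X i - X (i + 1)) := by
      rw [icc_to_range (m + 1) (fun n => P (n - 1) * (X (n - 1) - X n))]
      simp
    have h2 : ∑ n ∈ Finset.Icc 1 (m + 1 - 1), X n * (P n - P (n - 1))
        = ∑ i ∈ Finset.range m, X (i + 1) * (P (i + 1) - P i) := by
      simp only [Nat.add_sub_cancel]
      rw [icc_to_range m (fun n => X n * (P n - P (n - 1)))]
      simp
    rw [h1, h2, abel_aux, hXN]
    have hX0 : X 0 = X₀ := by rw [hX]; simp
    rw [hX0, hP0]
    ring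
  rw [habel]
  ring
end

section
/- Fix N ≥ 2, η > 0, ν ≥ 0 and κ ∈ (0,1) (strictly less than 1). Then the coefficients c_n defined by the backward recursion satisfy c_n < 0 for every n = 1,...,N−1. -/
set_option maxHeartbeats 1000000 in
/-- **Strict negativity of the coefficients `c n`** (existence of profitable round trips).
For `κ ∈ (0,1)` strictly less than one, the coefficients `c n` of the backward
recursion satisfy `c n < 0` for every `n = 1, …, N−1`. -/
theorem coeff_c_neg
    (N : ℕ) (hN : 2 ≤ N)
    (η κ ν : ℝ) (hη : 0 < η) (hκ0 : 0 < κ) (hκ1 : κ < 1) (hν : 0 ≤ ν)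
    (a b c : ℕ → ℝ)
    (haN : a N = η / 2) (hbN : b N = 1 - κ) (hcN : c N = 0)
    (hrec : ∀ n, 1 ≤ n → n < N →
      a n = ν + a (n + 1) - (2 * ν + 2 * a (n + 1) - η * b (n + 1)) ^ 2 /
          (2 * η + 4 * ν + 4 * a (n + 1) - 4 * η * b (n + 1) + 4 * η ^ 2 * c (n + 1)) ∧
      b n = (1 - κ) * b (n + 1) +
          2 * (1 - κ) * (2 * ν + 2 * a (n + 1) - η * b (n + 1)) *
            (1 - b (n + 1) + 2 * η * c (n + 1)) /
          (2 * η + 4 * ν + 4 * a (n + 1) - 4 * η * b (n + 1) + 4 * η ^ 2 * c (n + 1)) ∧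
      c n = (1 - κ) ^ 2 * c (n + 1) -
          (1 - κ) ^ 2 * (1 - b (n + 1) + 2 * η * c (n + 1)) ^ 2 /
          (2 * η + 4 * ν + 4 * a (n + 1) - 4 * η * b (n + 1) + 4 * η ^ 2 * c (n + 1))) :
    ∀ n, 1 ≤ n → n ≤ N - 1 → c n < 0 := by
  have hκ1' : 0 < 1 - κ := by linarith
  -- Invariant: b n ≥ 0, c n ≤ 0, u n := 2ν + 2 a n - η b n ≥ 0, v n := 1 - b n + 2η c n > 0
  have H : ∀ m n, 1 ≤ n → n + m = N →
      (0 ≤ b n ∧ c n ≤ 0 ∧ 0 ≤ 2 * ν + 2 * a n - η * b n ∧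
        0 < 1 - b n + 2 * η * c n) ∧ (n < N → c n < 0) := by
    intro m
    induction m with
    | zero =>
      intro n h1 h2
      have hnN : n = N := by omega
      subst hnN
      refine ⟨⟨by rw [hbN]; linarith, by rw [hcN], ?_, ?_⟩, fun h => absurd h (lt_irrefl _)⟩
      · rw [haN, hbN]; nlinarith
      · rw [hbN, hcN]; linarith
    | succ m ih =>
      intro n h1 h2
      have hn : n < N := by omega
      obtain ⟨hb', hc', hu', hv'⟩ := (ih (n + 1) (by omega) (by omega)).1
      obtain ⟨ha, hb, hc⟩ := hrec n h1 hn
      set u : ℝ := 2 * ν + 2 * a (n + 1) - η * b (n + 1) with hu_def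
      set v : ℝ := 1 - b (n + 1) + 2 * η * c (n + 1) with hv_def
      set Q : ℝ := 2 * η + 4 * ν + 4 * a (n + 1) - 4 * η * b (n + 1) +
          4 * η ^ 2 * c (n + 1) with hQ_def
      have hQeq : Q = 2 * u + 2 * η * v := by rw [hQ_def, hu_def, hv_def]; ring
      have hQ : 0 < Q := by rw [hQeq]; nlinarith
      have hQne : Q ≠ 0 := ne_of_gt hQ
      clear_value u v Q
      -- b n ≥ 0
      have hbn : 0 ≤ b n := by
        rw [hb]
        have h1 : 0 ≤ (1 - κ) * b (n + 1) := mul_nonneg (le_of_lt hκ1') hb'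
        have h2 : 0 ≤ 2 * (1 - κ) * u * v / Q := by positivity
        linarith
      -- c n < 0
      have hcn : c n < 0 := by
        rw [hc]
        have h1 : (1 - κ) ^ 2 * c (n + 1) ≤ 0 :=
          mul_nonpos_of_nonneg_of_nonpos (sq_nonneg _) hc'
        have h2 : 0 < (1 - κ) ^ 2 * v ^ 2 / Q := by positivity
        linarith
      -- u n ≥ 0
      have hun : 0 ≤ 2 * ν + 2 * a n - η * b n := by
        have hid : 2 * ν + 2 * a n - η * b n =
            2 * ν + η * κ * b (n + 1) + u - 2 * u * (u + η * (1 - κ) * v) / Q := by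
          rw [ha, hb, hu_def]
          ring
        rw [hid]
        have key : 2 * u * (u + η * (1 - κ) * v) / Q ≤ u := by
          rw [div_le_iff₀ hQ, hQeq]
          nlinarith [mul_nonneg (mul_nonneg hu' hη.le) (mul_nonneg hκ0.le hv'.le)]
        have hb2 : 0 ≤ η * κ * b (n + 1) := by positivity
        linarith
      -- v n > 0
      have hvn : 0 < 1 - b n + 2 * η * c n := by
        have hid : 1 - b n + 2 * η * c n =
            κ + (1 - κ) * 2 * η * κ * (v ^ 2 / Q - c (n + 1)) := by
          rw [hb, hc, hQeq, hu_def, hv_def]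
          have hD : (2 * (2 * ν + 2 * a (n + 1) - η * b (n + 1)) +
              2 * η * (1 - b (n + 1) + 2 * η * c (n + 1))) ≠ 0 := by
            rw [hQeq, hu_def, hv_def] at hQne; exact hQne
          have hD3 : 2 * (ν + a (n + 1)) - b (n + 1) * η +
              η * (1 - b (n + 1) + 2 * η * c (n + 1)) ≠ 0 := by
            intro h; apply hD; linear_combination 2 * h
          field_simp
          ring
        rw [hid]
        have h1 : 0 ≤ v ^ 2 / Q - c (n + 1) := by
          have : 0 ≤ v ^ 2 / Q := by positivity
          linarith
        have h2 : 0 ≤ (1 - κ) * 2 * η * κ * (v ^ 2 / Q - c (n + 1)) :=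
          mul_nonneg (by positivity) h1
        linarith
      exact ⟨⟨hbn, le_of_lt hcn, hun, hvn⟩, fun _ => hcn⟩
  intro n h1 h2
  have hnN : n < N := by omega
  exact (H (N - n) n h1 (by omega)).2 hnN
end

section
/- In the setting of the deterministic (σ = 0) linear problem, with (u°_n)_{n=1,...,N} the deterministic feedback sequence and X°_n, D°_n the associated inventory and deviation states (X°₀ = X₀, D°₀ = d₀, X°_n = X°_{n−1} − u°_n, D°_n = (1−κ)D°_{n−1} + η u°_n), the optimally controlled states admit the affine representations X°_n = 𝔞^x_{n+1}·u°₁ + 𝔟^x_{n+1}·d₀ + 𝔠^x_{n+1}·X₀ and D°_n = 𝔞^d_{n+1}·u°₁ + 𝔟^d_{n+1}·d₀ + 𝔠^d_{n+1}·X₀ for all n = 0,...,N−1. -/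
set_option maxHeartbeats 2000000

/-- One Riccati step preserves the invariants and positivity. -/
lemma riccati_inv_step (η κ ν a' b' c' a b c : ℝ)
    (hη : 0 < η) (hκ0 : 0 < κ) (hκ1 : κ ≤ 1) (hν : 0 ≤ ν) (ha' : 0 < a')
    (hb' : b' = 2 * (1 - κ) * a' / η)
    (hc' : c' = (1 - κ) ^ 2 * (2 * a' - η) / (2 * η ^ 2))
    (ha : a = ν + a' - (2 * ν + 2 * a' - η * b') ^ 2 /
        (2 * η + 4 * ν + 4 * a' - 4 * η * b' + 4 * η ^ 2 * c'))
    (hb : b = (1 - κ) * b' + 2 * (1 - κ) * (2 * ν + 2 * a' - η * b') *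
        (1 - b' + 2 * η * c') /
        (2 * η + 4 * ν + 4 * a' - 4 * η * b' + 4 * η ^ 2 * c'))
    (hc : c = (1 - κ) ^ 2 * c' - (1 - κ) ^ 2 * (1 - b' + 2 * η * c') ^ 2 /
        (2 * η + 4 * ν + 4 * a' - 4 * η * b' + 4 * η ^ 2 * c')) :
    0 < a ∧ b = 2 * (1 - κ) * a / η ∧ c = (1 - κ) ^ 2 * (2 * a - η) / (2 * η ^ 2) ∧
      2 * a * (η * κ * (2 - κ) + 2 * ν + 2 * κ ^ 2 * a') =
        2 * η * κ * (2 - κ) * (ν + a') + 4 * ν * (1 - κ) ^ 2 * a' := by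
  have hγ' : 0 < η * κ * (2 - κ) + 2 * ν + 2 * κ ^ 2 * a' := by
    have h1 : 0 < η * κ * (2 - κ) := by
      nlinarith [mul_pos (mul_pos hη hκ0) (show (0:ℝ) < 2 - κ by linarith)]
    have h2 : 0 < κ ^ 2 * a' := by positivity
    nlinarith
  have hQ : 2 * η + 4 * ν + 4 * a' - 4 * η * b' + 4 * η ^ 2 * c' =
      2 * (η * κ * (2 - κ) + 2 * ν + 2 * κ ^ 2 * a') := by
    rw [hb', hc']; field_simp; ring
  have haexp : a = (2 * η * κ * (2 - κ) * (ν + a') + 4 * ν * (1 - κ) ^ 2 * a') /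
      (2 * (η * κ * (2 - κ) + 2 * ν + 2 * κ ^ 2 * a')) := by
    have hne : η * κ * (2 - κ) + ν * 2 + a' * 2 * κ ^ 2 ≠ 0 := by apply ne_of_gt; linarith
    rw [ha, hQ, hb']; field_simp; ring
  have hapos : 0 < a := by
    rw [haexp]
    apply div_pos
    · have h1 : 0 < η * κ * (2 - κ) * (ν + a') := by
        nlinarith [mul_pos (mul_pos hη hκ0) (show (0:ℝ) < 2 - κ by linarith)]
      have h2 : 0 ≤ ν * ((1 - κ) ^ 2 * a') := by positivity
      nlinarith
    · linarith
  have hne : κ * η * (2 - κ) + 2 * ν + κ ^ 2 * 2 * a' ≠ 0 := by apply ne_of_gt; linarith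
  refine ⟨hapos, ?_, ?_, ?_⟩
  · rw [hb, hQ, hb', hc', haexp]; field_simp; ring
  · rw [hc, hQ, hb', hc', haexp]; field_simp; ring
  · rw [haexp]; field_simp

/-- The feedback control in cleared-denominator, invariant-simplified form. -/
lemma u_cleared (η κ ν A b c x d u : ℝ)
    (hη : 0 < η) (hκ0 : 0 < κ) (hκ1 : κ ≤ 1) (hν : 0 ≤ ν) (hA : 0 < A)
    (hb : b = 2 * (1 - κ) * A / η)
    (hc : c = (1 - κ) ^ 2 * (2 * A - η) / (2 * η ^ 2))
    (hu : u = ((2 * ν + 2 * A - η * b) * x - (1 - b + 2 * η * c) * (1 - κ) * d) /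
        (η + 2 * ν + 2 * A - 2 * η * b + 2 * η ^ 2 * c)) :
    u * ((η * κ * (2 - κ) + 2 * ν + 2 * κ ^ 2 * A) * η) =
      (2 * ν + 2 * κ * A) * x * η - κ * (1 - κ) * (η * (2 - κ) - 2 * A * (1 - κ)) * d := by
  have hγ : 0 < η * κ * (2 - κ) + 2 * ν + 2 * κ ^ 2 * A := by
    have h1 : 0 < η * κ * (2 - κ) := by
      nlinarith [mul_pos (mul_pos hη hκ0) (show (0:ℝ) < 2 - κ by linarith)]
    have h2 : 0 < κ ^ 2 * A := by positivity
    nlinarith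
  have hG : η + 2 * ν + 2 * A - 2 * η * b + 2 * η ^ 2 * c =
      η * κ * (2 - κ) + 2 * ν + 2 * κ ^ 2 * A := by
    rw [hb, hc]; field_simp; ring
  have hne : η * κ * (2 - κ) + 2 * ν + 2 * A * κ ^ 2 ≠ 0 := by apply ne_of_gt; linarith
  rw [hu, hG, hb, hc]
  field_simp
  ring

lemma key_identity (η κ ν A A' x d u' ui : ℝ)
    (hη : 0 < η) (hκ0 : 0 < κ) (hκ1 : κ ≤ 1) (hν : 0 ≤ ν) (hA' : 0 < A') (hA0 : 0 < A)
    (hE3 : 2 * A * (η * κ * (2 - κ) + 2 * ν + 2 * κ ^ 2 * A') =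
        2 * η * κ * (2 - κ) * (ν + A') + 4 * ν * (1 - κ) ^ 2 * A')
    (hE1 : u' * ((η * κ * (2 - κ) + 2 * ν + 2 * κ ^ 2 * A) * η) =
        (2 * ν + 2 * κ * A) * x * η - κ * (1 - κ) * (η * (2 - κ) - 2 * A * (1 - κ)) * d)
    (hE2 : ui * ((η * κ * (2 - κ) + 2 * ν + 2 * κ ^ 2 * A') * η) =
        (2 * ν + 2 * κ * A') * (x - u') * η -
          κ * (1 - κ) * (η * (2 - κ) - 2 * A' * (1 - κ)) * ((1 - κ) * d + η * u')) :
    ui = κ * (2 * κ * η - κ ^ 2 * η + 2 * ν) /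
            (2 * κ * η - κ ^ 2 * η - 2 * κ * ν + 2 * ν) * u' +
        κ ^ 2 * (2 - 3 * κ + κ ^ 2) /
            (2 * κ * η - κ ^ 2 * η - 2 * κ * ν + 2 * ν) * d +
        -2 * κ * ν / (2 * κ * η - κ ^ 2 * η - 2 * κ * ν + 2 * ν) * x := by
  have hk2 : (0:ℝ) < 2 - κ := by linarith
  have hγ : 0 < η * κ * (2 - κ) + 2 * ν + 2 * κ ^ 2 * A := by
    nlinarith [mul_pos (mul_pos hη hκ0) hk2, mul_pos (mul_pos hκ0 hκ0) hA0]
  have hγ' : 0 < η * κ * (2 - κ) + 2 * ν + 2 * κ ^ 2 * A' := by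
    nlinarith [mul_pos (mul_pos hη hκ0) hk2, mul_pos (mul_pos hκ0 hκ0) hA']
  have hden : 0 < 2 * κ * η - κ ^ 2 * η - 2 * κ * ν + 2 * ν := by
    nlinarith [mul_pos (mul_pos hη hκ0) hk2, mul_nonneg hν (show (0:ℝ) ≤ 1 - κ by linarith)]
  have hM : (0:ℝ) < ((η * κ * (2 - κ) + 2 * ν + 2 * κ ^ 2 * A') * η) *
      (((η * κ * (2 - κ) + 2 * ν + 2 * κ ^ 2 * A) * η) *
        (4 * (η * κ * (2 - κ) + 2 * ν + 2 * κ ^ 2 * A') ^ 2)) := by positivity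
  have hcancel : (ui * (2 * κ * η - κ ^ 2 * η - 2 * κ * ν + 2 * ν)) *
      (((η * κ * (2 - κ) + 2 * ν + 2 * κ ^ 2 * A') * η) *
        (((η * κ * (2 - κ) + 2 * ν + 2 * κ ^ 2 * A) * η) *
          (4 * (η * κ * (2 - κ) + 2 * ν + 2 * κ ^ 2 * A') ^ 2))) =
      (κ * (2 * κ * η - κ ^ 2 * η + 2 * ν) * u' + κ ^ 2 * (2 - 3 * κ + κ ^ 2) * d
        - 2 * κ * ν * x) *
      (((η * κ * (2 - κ) + 2 * ν + 2 * κ ^ 2 * A') * η) *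
        (((η * κ * (2 - κ) + 2 * ν + 2 * κ ^ 2 * A) * η) *
          (4 * (η * κ * (2 - κ) + 2 * ν + 2 * κ ^ 2 * A') ^ 2))) := by
    linear_combination
      (((-64:ℝ)) * η * ν^4 + ((-256:ℝ)) * η * κ^2 * ν^3 * A' + (128:ℝ) * η * κ^3 * ν^3 * A' + ((-320:ℝ)) * η * κ^4 * ν^2 * A'^2 + ((-64:ℝ)) * η * κ^4 * ν^3 * A' + (256:ℝ) * η * κ^5 * ν^2 * A'^2 + ((-128:ℝ)) * η * κ^6 * ν * A'^3 + ((-128:ℝ)) * η * κ^6 * ν^2 * A'^2 + (128:ℝ) * η * κ^7 * ν * A'^3 + ((-64:ℝ)) * η * κ^8 * ν * A'^3 + ((-256:ℝ)) * η^2 * κ * ν^3 + (128:ℝ) * η^2 * κ^2 * ν^3 + ((-768:ℝ)) * η^2 * κ^3 * ν^2 * A' + ((-64:ℝ)) * η^2 * κ^3 * ν^3 + (640:ℝ) * η^2 * κ^4 * ν^2 * A' + (32:ℝ) * η^2 * κ^4 * ν^3 + ((-640:ℝ)) * η^2 * κ^5 * ν * A'^2 + ((-384:ℝ)) * η^2 *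 κ^5 * ν^2 * A' + (576:ℝ) * η^2 * κ^6 * ν * A'^2 + (128:ℝ) * η^2 * κ^6 * ν^2 * A' + ((-128:ℝ)) * η^2 * κ^7 * A'^3 + ((-320:ℝ)) * η^2 * κ^7 * ν * A'^2 + (64:ℝ) * η^2 * κ^8 * A'^3 + (96:ℝ) * η^2 * κ^8 * ν * A'^2 + ((-384:ℝ)) * η^3 * κ^2 * ν^2 + (384:ℝ) * η^3 * κ^3 * ν^2 + ((-768:ℝ)) * η^3 * κ^4 * ν * A' + ((-224:ℝ)) * η^3 * κ^4 * ν^2 + (896:ℝ) * η^3 * κ^5 * ν * A' + (128:ℝ) * η^3 * κ^5 * ν^2 + ((-320:ℝ)) * η^3 * κ^6 * A'^2 + ((-512:ℝ)) * η^3 * κ^6 * ν * A' + ((-32:ℝ)) * η^3 * κ^6 * ν^2 + (320:ℝ) * η^3 * κ^7 * A'^2 + (224:ℝ) * η^3 * κ^7 * ν * A' + ((-80:ℝ)) * η^3 * κ^8 * A'^2 + ((-48:ℝ)) * η^3 * κ^8 * ν * A' + ((-256:ℝ)) * η^4 * κ^3 * ν + (384:ℝ) * η^4 * κ^4 * ν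 + ((-256:ℝ)) * η^4 * κ^5 * A' + ((-256:ℝ)) * η^4 * κ^5 * ν + (384:ℝ) * η^4 * κ^6 * A' + (128:ℝ) * η^4 * κ^6 * ν + ((-192:ℝ)) * η^4 * κ^7 * A' + ((-48:ℝ)) * η^4 * κ^7 * ν + (32:ℝ) * η^4 * κ^8 * A' + (8:ℝ) * η^4 * κ^8 * ν + ((-64:ℝ)) * η^5 * κ^4 + (128:ℝ) * η^5 * κ^5 + ((-96:ℝ)) * η^5 * κ^6 + (32:ℝ) * η^5 * κ^7 + ((-4:ℝ)) * η^5 * κ^8) * hE1 +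
      ((64:ℝ) * η * ν^4 + ((-64:ℝ)) * η * κ * ν^4 + (128:ℝ) * η * κ^2 * ν^3 * A' + (64:ℝ) * η * κ^2 * ν^3 * A + ((-128:ℝ)) * η * κ^3 * ν^3 * A' + ((-64:ℝ)) * η * κ^3 * ν^3 * A + (64:ℝ) * η * κ^4 * ν^2 * A'^2 + (128:ℝ) * η * κ^4 * ν^2 * A * A' + ((-64:ℝ)) * η * κ^5 * ν^2 * A'^2 + ((-128:ℝ)) * η * κ^5 * ν^2 * A * A' + (64:ℝ) * η * κ^6 * ν * A * A'^2 + ((-64:ℝ)) * η * κ^7 * ν * A * A'^2 + (256:ℝ) * η^2 * κ * ν^3 + ((-320:ℝ)) * η^2 * κ^2 * ν^3 + (384:ℝ) * η^2 * κ^3 * ν^2 * A' + (192:ℝ) * η^2 * κ^3 * ν^2 * A + (96:ℝ) * η^2 * κ^3 * ν^3 + ((-448:ℝ)) * η^2 * κ^4 * ν^2 * A' + ((-224:ℝ)) * η^2 * κ^4 * ν^2 * A + (128:ℝ) * η^2 * κ^5 * ν * A'^2 + (256:ℝ) * η^2 * κ^5 * ν * A * A' + (128:ℝ) * η^2 * κ^5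 * ν^2 * A' + (64:ℝ) * η^2 * κ^5 * ν^2 * A + ((-128:ℝ)) * η^2 * κ^6 * ν * A'^2 + ((-256:ℝ)) * η^2 * κ^6 * ν * A * A' + (64:ℝ) * η^2 * κ^7 * A * A'^2 + (32:ℝ) * η^2 * κ^7 * ν * A'^2 + (64:ℝ) * η^2 * κ^7 * ν * A * A' + ((-32:ℝ)) * η^2 * κ^8 * A * A'^2 + (384:ℝ) * η^3 * κ^2 * ν^2 + ((-576:ℝ)) * η^3 * κ^3 * ν^2 + (384:ℝ) * η^3 * κ^4 * ν * A' + (192:ℝ) * η^3 * κ^4 * ν * A + (288:ℝ) * η^3 * κ^4 * ν^2 + ((-512:ℝ)) * η^3 * κ^5 * ν * A' + ((-256:ℝ)) * η^3 * κ^5 * ν * A + ((-48:ℝ)) * η^3 * κ^5 * ν^2 + (64:ℝ) * η^3 * κ^6 * A'^2 + (128:ℝ) * η^3 * κ^6 * A * A' + (224:ℝ) * η^3 * κ^6 * ν * A' + (112:ℝ) * η^3 * κ^6 * ν * A + ((-64:ℝ)) * η^3 * κ^7 * A'^2 + ((-128:ℝ)) * η^3 * κ^7 * A * A' + ((-32:ℝ))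 * η^3 * κ^7 * ν * A' + ((-16:ℝ)) * η^3 * κ^7 * ν * A + (16:ℝ) * η^3 * κ^8 * A'^2 + (32:ℝ) * η^3 * κ^8 * A * A' + (256:ℝ) * η^4 * κ^3 * ν + ((-448:ℝ)) * η^4 * κ^4 * ν + (128:ℝ) * η^4 * κ^5 * A' + (64:ℝ) * η^4 * κ^5 * A + (288:ℝ) * η^4 * κ^5 * ν + ((-192:ℝ)) * η^4 * κ^6 * A' + ((-96:ℝ)) * η^4 * κ^6 * A + ((-80:ℝ)) * η^4 * κ^6 * ν + (96:ℝ) * η^4 * κ^7 * A' + (48:ℝ) * η^4 * κ^7 * A + (8:ℝ) * η^4 * κ^7 * ν + ((-16:ℝ)) * η^4 * κ^8 * A' + ((-8:ℝ)) * η^4 * κ^8 * A + (64:ℝ) * η^5 * κ^4 + ((-128:ℝ)) * η^5 * κ^5 + (96:ℝ) * η^5 * κ^6 + ((-32:ℝ)) * η^5 * κ^7 + (4:ℝ) * η^5 * κ^8) * hE2 +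
      (((-32:ℝ)) * η * κ * ν^3 * d + (64:ℝ) * η * κ^2 * ν^3 * d + ((-64:ℝ)) * η * κ^3 * ν^2 * A' * d + ((-32:ℝ)) * η * κ^3 * ν^3 * d + (128:ℝ) * η * κ^4 * ν^2 * A' * d + ((-32:ℝ)) * η * κ^5 * ν * A'^2 * d + ((-64:ℝ)) * η * κ^5 * ν^2 * A' * d + (64:ℝ) * η * κ^6 * ν * A'^2 * d + ((-32:ℝ)) * η * κ^7 * ν * A'^2 * d + ((-32:ℝ)) * η^2 * κ * ν^3 * x + ((-96:ℝ)) * η^2 * κ^2 * ν^2 * d + (32:ℝ) * η^2 * κ^2 * ν^3 * x + (208:ℝ) * η^2 * κ^3 * ν^2 * d + ((-64:ℝ)) * η^2 * κ^3 * ν^2 * A' * x + ((-128:ℝ)) * η^2 * κ^4 * ν * A' * d + ((-144:ℝ)) * η^2 * κ^4 * ν^2 * d + (64:ℝ) * η^2 * κ^4 * ν^2 * A' * x + (256:ℝ) * η^2 * κ^5 * ν * A' * d + ((-32:ℝ)) * η^2 * κ^5 * ν * A'^2 * x + (32:ℝ) * η^2 * κ^5 * ν^2 * d + ((-32:ℝ))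 * η^2 * κ^6 * A'^2 * d + ((-160:ℝ)) * η^2 * κ^6 * ν * A' * d + (32:ℝ) * η^2 * κ^6 * ν * A'^2 * x + (48:ℝ) * η^2 * κ^7 * A'^2 * d + (32:ℝ) * η^2 * κ^7 * ν * A' * d + ((-16:ℝ)) * η^2 * κ^8 * A'^2 * d + ((-96:ℝ)) * η^3 * κ^2 * ν^2 * x + ((-96:ℝ)) * η^3 * κ^3 * ν * d + (112:ℝ) * η^3 * κ^3 * ν^2 * x + (224:ℝ) * η^3 * κ^4 * ν * d + ((-128:ℝ)) * η^3 * κ^4 * ν * A' * x + ((-32:ℝ)) * η^3 * κ^4 * ν^2 * x + ((-64:ℝ)) * η^3 * κ^5 * A' * d + ((-184:ℝ)) * η^3 * κ^5 * ν * d + (128:ℝ) * η^3 * κ^5 * ν * A' * x + (128:ℝ) * η^3 * κ^6 * A' * d + ((-32:ℝ)) * η^3 * κ^6 * A'^2 * x + (64:ℝ) * η^3 * κ^6 * ν * d + ((-32:ℝ)) * η^3 * κ^6 * ν * A' * x + ((-80:ℝ)) * η^3 * κ^7 * A' * d + (16:ℝ) * η^3 * κ^7 * A'^2 * x + ((-8:ℝ))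 * η^3 * κ^7 * ν * d + (16:ℝ) * η^3 * κ^8 * A' * d + ((-96:ℝ)) * η^4 * κ^3 * ν * x + ((-32:ℝ)) * η^4 * κ^4 * d + (128:ℝ) * η^4 * κ^4 * ν * x + (80:ℝ) * η^4 * κ^5 * d + ((-64:ℝ)) * η^4 * κ^5 * A' * x + ((-56:ℝ)) * η^4 * κ^5 * ν * x + ((-72:ℝ)) * η^4 * κ^6 * d + (64:ℝ) * η^4 * κ^6 * A' * x + (8:ℝ) * η^4 * κ^6 * ν * x + (28:ℝ) * η^4 * κ^7 * d + ((-16:ℝ)) * η^4 * κ^7 * A' * x + ((-4:ℝ)) * η^4 * κ^8 * d + ((-32:ℝ)) * η^5 * κ^4 * x + (48:ℝ) * η^5 * κ^5 * x + ((-24:ℝ)) * η^5 * κ^6 * x + (4:ℝ) * η^5 * κ^7 * x) * hE3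
  have h2 : ui * (2 * κ * η - κ ^ 2 * η - 2 * κ * ν + 2 * ν) =
      κ * (2 * κ * η - κ ^ 2 * η + 2 * ν) * u' + κ ^ 2 * (2 - 3 * κ + κ ^ 2) * d
        - 2 * κ * ν * x :=
    mul_right_cancel₀ hM.ne' hcancel
  have hne : κ * (η * (2 - κ) - 2 * ν) + 2 * ν ≠ 0 := by apply ne_of_gt; linarith
  field_simp
  linarith [h2]




/-- **Affine representation of the optimally controlled states**
(Proposition 3.2). In the deterministic (`σ = 0`) linear problem, the remaining
inventory and the deviation process of the optimal feedback strategy satisfy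
`X_n = 𝔞ˣ_{n+1}·u₁ + 𝔟ˣ_{n+1}·d₀ + 𝔠ˣ_{n+1}·X₀` and
`D_n = 𝔞ᵈ_{n+1}·u₁ + 𝔟ᵈ_{n+1}·d₀ + 𝔠ᵈ_{n+1}·X₀` for `n = 0, …, N−1`. -/
theorem deterministic_states_representation
    (N : ℕ) (hN : 2 ≤ N)
    (η κ ν : ℝ) (hη : 0 < η) (hκ0 : 0 < κ) (hκ1 : κ ≤ 1) (hν : 0 ≤ ν)
    (X₀ d₀ : ℝ) (hX₀ : 0 < X₀)
    (a b c : ℕ → ℝ)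
    (haN : a N = η / 2) (hbN : b N = 1 - κ) (hcN : c N = 0)
    (hrec : ∀ n, 1 ≤ n → n < N →
      a n = ν + a (n + 1) - (2 * ν + 2 * a (n + 1) - η * b (n + 1)) ^ 2 /
          (2 * η + 4 * ν + 4 * a (n + 1) - 4 * η * b (n + 1) + 4 * η ^ 2 * c (n + 1)) ∧
      b n = (1 - κ) * b (n + 1) +
          2 * (1 - κ) * (2 * ν + 2 * a (n + 1) - η * b (n + 1)) *
            (1 - b (n + 1) + 2 * η * c (n + 1)) /
          (2 * η + 4 * ν + 4 * a (n + 1) - 4 * η * b (n + 1) + 4 * η ^ 2 * c (n + 1)) ∧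
      c n = (1 - κ) ^ 2 * c (n + 1) -
          (1 - κ) ^ 2 * (1 - b (n + 1) + 2 * η * c (n + 1)) ^ 2 /
          (2 * η + 4 * ν + 4 * a (n + 1) - 4 * η * b (n + 1) + 4 * η ^ 2 * c (n + 1)))
    (u X D : ℕ → ℝ)
    (hX0 : X 0 = X₀) (hD0 : D 0 = d₀)
    (hu : ∀ n, 1 ≤ n → n ≤ N - 1 →
      u n = ((2 * ν + 2 * a (n + 1) - η * b (n + 1)) * X (n - 1) -
          (1 - b (n + 1) + 2 * η * c (n + 1)) * (1 - κ) * D (n - 1)) /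
        (η + 2 * ν + 2 * a (n + 1) - 2 * η * b (n + 1) + 2 * η ^ 2 * c (n + 1)))
    (huN : u N = X (N - 1))
    (hXrec : ∀ n, 1 ≤ n → n ≤ N → X n = X (n - 1) - u n)
    (hDrec : ∀ n, 1 ≤ n → n ≤ N → D n = (1 - κ) * D (n - 1) + η * u n)
    (atilde btilde ctilde : ℝ)
    (hat : atilde = κ * (2 * κ * η - κ ^ 2 * η + 2 * ν) /
        (2 * κ * η - κ ^ 2 * η - 2 * κ * ν + 2 * ν))
    (hbt : btilde = κ ^ 2 * (2 - 3 * κ + κ ^ 2) /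
        (2 * κ * η - κ ^ 2 * η - 2 * κ * ν + 2 * ν))
    (hct : ctilde = -2 * κ * ν / (2 * κ * η - κ ^ 2 * η - 2 * κ * ν + 2 * ν))
    (A B C : ℕ → ℝ)
    (hA1 : A 1 = 1) (hB1 : B 1 = 0) (hC1 : C 1 = 0)
    (hA2 : A 2 = atilde) (hB2 : B 2 = btilde) (hC2 : C 2 = ctilde)
    (hAi : ∀ i, 3 ≤ i → i ≤ N - 1 →
      A i = atilde * A (i - 1) +
        ∑ j ∈ Finset.Icc 1 (i - 2), (btilde * η * (1 - κ) ^ (i - 2 - j) - ctilde) * A j)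
    (hBi : ∀ i, 3 ≤ i → i ≤ N - 1 →
      B i = atilde * B (i - 1) + btilde * (1 - κ) ^ (i - 2) +
        ∑ j ∈ Finset.Icc 1 (i - 2), (btilde * η * (1 - κ) ^ (i - 2 - j) - ctilde) * B j)
    (hCi : ∀ i, 3 ≤ i → i ≤ N - 1 →
      C i = atilde * C (i - 1) + ctilde +
        ∑ j ∈ Finset.Icc 1 (i - 2), (btilde * η * (1 - κ) ^ (i - 2 - j) - ctilde) * C j)
    (hAN : A N = -∑ j ∈ Finset.Icc 1 (N - 1), A j)
    (hBN : B N = -∑ j ∈ Finset.Icc 1 (N - 1), B j)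
    (hCN : C N = 1 - ∑ j ∈ Finset.Icc 1 (N - 1), C j)
    (Ax Bx Cx : ℕ → ℝ)
    (hAx1 : Ax 1 = 0) (hBx1 : Bx 1 = 0) (hCx1 : Cx 1 = 1)
    (hAx : ∀ i, 1 ≤ i → i ≤ N - 1 → Ax (i + 1) = -∑ j ∈ Finset.Icc 1 i, A j)
    (hBx : ∀ i, 1 ≤ i → i ≤ N - 1 → Bx (i + 1) = -∑ j ∈ Finset.Icc 1 i, B j)
    (hCx : ∀ i, 1 ≤ i → i ≤ N - 1 → Cx (i + 1) = 1 - ∑ j ∈ Finset.Icc 1 i, C j)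
    (Ad Bd Cd : ℕ → ℝ)
    (hAd1 : Ad 1 = 0) (hBd1 : Bd 1 = 1) (hCd1 : Cd 1 = 0)
    (hAd : ∀ i, 1 ≤ i → i ≤ N - 1 →
      Ad (i + 1) = ∑ j ∈ Finset.Icc 1 i, η * (1 - κ) ^ (i - j) * A j)
    (hBd : ∀ i, 1 ≤ i → i ≤ N - 1 →
      Bd (i + 1) = (1 - κ) ^ i + ∑ j ∈ Finset.Icc 1 i, η * (1 - κ) ^ (i - j) * B j)
    (hCd : ∀ i, 1 ≤ i → i ≤ N - 1 →
      Cd (i + 1) = ∑ j ∈ Finset.Icc 1 i, η * (1 - κ) ^ (i - j) * C j)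
    :
    ∀ n, n ≤ N - 1 →
      X n = Ax (n + 1) * u 1 + Bx (n + 1) * d₀ + Cx (n + 1) * X₀ ∧
        D n = Ad (n + 1) * u 1 + Bd (n + 1) * d₀ + Cd (n + 1) * X₀ := by
  -- Invariants of the Riccati recursion
  have hP : ∀ k, k ≤ N - 1 → 0 < a (N - k) ∧
      b (N - k) = 2 * (1 - κ) * a (N - k) / η ∧
      c (N - k) = (1 - κ) ^ 2 * (2 * a (N - k) - η) / (2 * η ^ 2) := by
    intro k
    induction k with
    | zero =>
      intro _
      simp only [Nat.sub_zero]
      refine ⟨by rw [haN]; positivity, ?_, ?_⟩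
      · rw [hbN, haN]; field_simp
      · rw [hcN, haN]
        have h0 : 2 * (η / 2) - η = 0 := by ring
        rw [h0]; simp
    | succ k ih =>
      intro hk
      have hprev := ih (by omega)
      have h1 : N - k = (N - (k + 1)) + 1 := by omega
      rw [h1] at hprev
      obtain ⟨hr1, hr2, hr3⟩ := hrec (N - (k + 1)) (by omega) (by omega)
      obtain ⟨hx1, hx2, hx3, _⟩ := riccati_inv_step η κ ν
        (a (N - (k + 1) + 1)) (b (N - (k + 1) + 1)) (c (N - (k + 1) + 1))
        (a (N - (k + 1))) (b (N - (k + 1))) (c (N - (k + 1)))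
        hη hκ0 hκ1 hν hprev.1 hprev.2.1 hprev.2.2 hr1 hr2 hr3
      exact ⟨hx1, hx2, hx3⟩
  have hInv : ∀ n, 1 ≤ n → n ≤ N → 0 < a n ∧
      b n = 2 * (1 - κ) * a n / η ∧
      c n = (1 - κ) ^ 2 * (2 * a n - η) / (2 * η ^ 2) := by
    intro n h1 h2
    have := hP (N - n) (by omega)
    rwa [show N - (N - n) = n by omega] at this
  have hE3gen : ∀ n, 1 ≤ n → n < N →
      2 * a n * (η * κ * (2 - κ) + 2 * ν + 2 * κ ^ 2 * a (n + 1)) =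
        2 * η * κ * (2 - κ) * (ν + a (n + 1)) + 4 * ν * (1 - κ) ^ 2 * a (n + 1) := by
    intro n h1 h2
    obtain ⟨hr1, hr2, hr3⟩ := hrec n h1 h2
    obtain ⟨hp1, hp2, hp3⟩ := hInv (n + 1) (by omega) (by omega)
    exact (riccati_inv_step η κ ν (a (n + 1)) (b (n + 1)) (c (n + 1))
      (a n) (b n) (c n) hη hκ0 hκ1 hν hp1 hp2 hp3 hr1 hr2 hr3).2.2.2
  -- Key one-step relation for the controls
  have hKey : ∀ i, 2 ≤ i → i ≤ N - 1 →
      u i = atilde * u (i - 1) + btilde * D (i - 2) + ctilde * X (i - 2) := by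
    intro i h2i hiN
    obtain ⟨m, rfl⟩ : ∃ m, i = m + 2 := ⟨i - 2, by omega⟩
    obtain ⟨ha3, hb3, hc3⟩ := hInv (m + 3) (by omega) (by omega)
    obtain ⟨ha2, hb2, hc2⟩ := hInv (m + 2) (by omega) (by omega)
    have hE3 := hE3gen (m + 2) (by omega) (by omega)
    simp only [show m + 2 + 1 = m + 3 from rfl] at hE3
    have hu1 := hu (m + 1) (by omega) (by omega)
    simp only [show m + 1 + 1 = m + 2 from rfl, show m + 1 - 1 = m from rfl] at hu1
    have hE1 := u_cleared η κ ν (a (m + 2)) (b (m + 2)) (c (m + 2))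
      (X m) (D m) (u (m + 1)) hη hκ0 hκ1 hν ha2 hb2 hc2 hu1
    have hu2 := hu (m + 2) (by omega) (by omega)
    simp only [show m + 2 + 1 = m + 3 from rfl, show m + 2 - 1 = m + 1 from rfl] at hu2
    have hE2 := u_cleared η κ ν (a (m + 3)) (b (m + 3)) (c (m + 3))
      (X (m + 1)) (D (m + 1)) (u (m + 2)) hη hκ0 hκ1 hν ha3 hb3 hc3 hu2
    have hXr := hXrec (m + 1) (by omega) (by omega)
    have hDr := hDrec (m + 1) (by omega) (by omega)
    simp only [show m + 1 - 1 = m from rfl] at hXr hDr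
    rw [hXr, hDr] at hE2
    have hki := key_identity η κ ν (a (m + 2)) (a (m + 3)) (X m) (D m)
      (u (m + 1)) (u (m + 2)) hη hκ0 hκ1 hν ha3 ha2 hE3 hE1 hE2
    simp only [show m + 2 - 1 = m + 1 from rfl, show m + 2 - 2 = m from rfl]
    rw [hat, hbt, hct]
    exact hki
  -- Sum representation of the states
  have hSX : ∀ n, n ≤ N → X n = X₀ - ∑ j ∈ Finset.Icc 1 n, u j := by
    intro n
    induction n with
    | zero => intro _; simpa using hX0
    | succ n ih =>
      intro h
      have hXr := hXrec (n + 1) (by omega) h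
      simp only [Nat.add_sub_cancel] at hXr
      rw [hXr, ih (by omega), Finset.sum_Icc_succ_top (show 1 ≤ n + 1 by omega)]
      ring
  have hSD : ∀ n, n ≤ N →
      D n = (1 - κ) ^ n * d₀ + ∑ j ∈ Finset.Icc 1 n, η * (1 - κ) ^ (n - j) * u j := by
    intro n
    induction n with
    | zero => intro _; simpa using hD0
    | succ n ih =>
      intro h
      have hDr := hDrec (n + 1) (by omega) h
      simp only [Nat.add_sub_cancel] at hDr
      rw [hDr, ih (by omega), Finset.sum_Icc_succ_top (show 1 ≤ n + 1 by omega)]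
      have hs : ∑ j ∈ Finset.Icc 1 n, η * (1 - κ) ^ (n + 1 - j) * u j =
          (1 - κ) * ∑ j ∈ Finset.Icc 1 n, η * (1 - κ) ^ (n - j) * u j := by
        rw [Finset.mul_sum]
        refine Finset.sum_congr rfl fun j hj => ?_
        have hj2 : j ≤ n := (Finset.mem_Icc.mp hj).2
        rw [show n + 1 - j = (n - j) + 1 by omega, pow_succ]
        ring
      rw [hs, Nat.sub_self, pow_zero]
      ring
  -- Affine representation of the controls
  have hUaff : ∀ j, j ≤ N - 1 → 1 ≤ j → u j = A j * u 1 + B j * d₀ + C j * X₀ := by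
    intro j
    induction j using Nat.strong_induction_on with
    | _ j IH =>
      intro hj2 hj1
      rcases Nat.lt_or_ge j 3 with h3 | h3
      · interval_cases j
        · rw [hA1, hB1, hC1]; ring
        · have hk := hKey 2 le_rfl (by omega)
          norm_num at hk
          rw [hk, hD0, hX0, hA2, hB2, hC2]
      · obtain ⟨m, rfl⟩ : ∃ m, j = m + 3 := ⟨j - 3, by omega⟩
        have hk := hKey (m + 3) (by omega) hj2
        simp only [show m + 3 - 1 = m + 2 from rfl, show m + 3 - 2 = m + 1 from rfl] at hk
        have hDrep := hSD (m + 1) (by omega)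
        have hXrep := hSX (m + 1) (by omega)
        have hIHl : ∀ l ∈ Finset.Icc 1 (m + 1),
            u l = A l * u 1 + B l * d₀ + C l * X₀ := by
          intro l hl
          obtain ⟨hl1, hl2⟩ := Finset.mem_Icc.mp hl
          exact IH l (by omega) (by omega) hl1
        have hIHtop := IH (m + 2) (by omega) (by omega) (by omega)
        have hs1 : ∑ l ∈ Finset.Icc 1 (m + 1), u l =
            (∑ l ∈ Finset.Icc 1 (m + 1), A l) * u 1 +
            (∑ l ∈ Finset.Icc 1 (m + 1), B l) * d₀ +
            (∑ l ∈ Finset.Icc 1 (m + 1), C l) * X₀ := by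
          rw [Finset.sum_congr rfl hIHl, Finset.sum_add_distrib, Finset.sum_add_distrib,
            ← Finset.sum_mul, ← Finset.sum_mul, ← Finset.sum_mul]
        have hs2 : ∑ l ∈ Finset.Icc 1 (m + 1), η * (1 - κ) ^ (m + 1 - l) * u l =
            (∑ l ∈ Finset.Icc 1 (m + 1), η * (1 - κ) ^ (m + 1 - l) * A l) * u 1 +
            (∑ l ∈ Finset.Icc 1 (m + 1), η * (1 - κ) ^ (m + 1 - l) * B l) * d₀ +
            (∑ l ∈ Finset.Icc 1 (m + 1), η * (1 - κ) ^ (m + 1 - l) * C l) * X₀ := by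
          rw [Finset.sum_congr rfl (fun l hl => by rw [hIHl l hl]; ring :
              ∀ l ∈ Finset.Icc 1 (m + 1), η * (1 - κ) ^ (m + 1 - l) * u l =
                η * (1 - κ) ^ (m + 1 - l) * A l * u 1 +
                η * (1 - κ) ^ (m + 1 - l) * B l * d₀ +
                η * (1 - κ) ^ (m + 1 - l) * C l * X₀),
            Finset.sum_add_distrib, Finset.sum_add_distrib,
            ← Finset.sum_mul, ← Finset.sum_mul, ← Finset.sum_mul]
        have hsplit : ∀ F : ℕ → ℝ,
            ∑ l ∈ Finset.Icc 1 (m + 1), (btilde * η * (1 - κ) ^ (m + 1 - l) - ctilde) * F l =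
            btilde * (∑ l ∈ Finset.Icc 1 (m + 1), η * (1 - κ) ^ (m + 1 - l) * F l) -
            ctilde * (∑ l ∈ Finset.Icc 1 (m + 1), F l) := by
          intro F
          rw [Finset.mul_sum, Finset.mul_sum, ← Finset.sum_sub_distrib]
          exact Finset.sum_congr rfl fun l _ => by ring
        have hAe := hAi (m + 3) (by omega) hj2
        have hBe := hBi (m + 3) (by omega) hj2
        have hCe := hCi (m + 3) (by omega) hj2
        simp only [show m + 3 - 1 = m + 2 from rfl, show m + 3 - 2 = m + 1 from rfl]
          at hAe hBe hCe
        rw [hk, hDrep, hXrep, hIHtop, hs1, hs2, hAe, hBe, hCe,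
          hsplit A, hsplit B, hsplit C]
        ring
  have hsumU : ∀ n, 1 ≤ n → n ≤ N - 1 → ∑ j ∈ Finset.Icc 1 n, u j =
      (∑ j ∈ Finset.Icc 1 n, A j) * u 1 + (∑ j ∈ Finset.Icc 1 n, B j) * d₀ +
      (∑ j ∈ Finset.Icc 1 n, C j) * X₀ := by
    intro n h1 h2
    rw [Finset.sum_congr rfl (fun l hl => by
        obtain ⟨hl1, hl2⟩ := Finset.mem_Icc.mp hl
        exact hUaff l (by omega) hl1 :
        ∀ l ∈ Finset.Icc 1 n, u l = A l * u 1 + B l * d₀ + C l * X₀),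
      Finset.sum_add_distrib, Finset.sum_add_distrib,
      ← Finset.sum_mul, ← Finset.sum_mul, ← Finset.sum_mul]
  have hsumW : ∀ n, 1 ≤ n → n ≤ N - 1 →
      ∑ j ∈ Finset.Icc 1 n, η * (1 - κ) ^ (n - j) * u j =
      (∑ j ∈ Finset.Icc 1 n, η * (1 - κ) ^ (n - j) * A j) * u 1 +
      (∑ j ∈ Finset.Icc 1 n, η * (1 - κ) ^ (n - j) * B j) * d₀ +
      (∑ j ∈ Finset.Icc 1 n, η * (1 - κ) ^ (n - j) * C j) * X₀ := by
    intro n h1 h2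
    rw [Finset.sum_congr rfl (fun l hl => by
        obtain ⟨hl1, hl2⟩ := Finset.mem_Icc.mp hl
        rw [hUaff l (by omega) hl1]; ring :
        ∀ l ∈ Finset.Icc 1 n, η * (1 - κ) ^ (n - l) * u l =
          η * (1 - κ) ^ (n - l) * A l * u 1 + η * (1 - κ) ^ (n - l) * B l * d₀ +
          η * (1 - κ) ^ (n - l) * C l * X₀),
      Finset.sum_add_distrib, Finset.sum_add_distrib,
      ← Finset.sum_mul, ← Finset.sum_mul, ← Finset.sum_mul]
  -- Conclusion
  intro n hn
  rcases Nat.eq_zero_or_pos n with rfl | hn1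
  · constructor
    · rw [hX0, hAx1, hBx1, hCx1]; ring
    · rw [hD0, hAd1, hBd1, hCd1]; ring
  · constructor
    · rw [hSX n (by omega), hsumU n hn1 hn, hAx n hn1 hn, hBx n hn1 hn, hCx n hn1 hn]
      ring
    · rw [hSD n (by omega), hsumW n hn1 hn, hAd n hn1 hn, hBd n hn1 hn, hCd n hn1 hn]
      ring
end

section
/- Fix N ≥ 3, η > 0, κ ∈ (0,1], set ν = 0, take α = 1, σ = 0, X₀ > 0 and initial deviation d₀ = 0. Let (u°_n)_{n=1,...,N} be the deterministic feedback sequence of the linear problem. Then the optimal strategy is the symmetric U-shape: u°₁ = u°_N = X₀/(2 + (N−2)κ) and u°_n = κ·u°₁ for all n = 2,...,N−1. In particular, for full resilience κ = 1 all trades equal X₀/N. -/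
set_option maxHeartbeats 2000000


/-- **The symmetric U-shaped Obizhaeva–Wang strategy** (Corollary 3.3, `d₀ = 0`).
In the deterministic (`σ = 0`) linear problem with `ν = 0` and zero initial
deviation, the optimal trades are `u₁ = u_N = X₀/(2 + (N−2)κ)` and
`u_n = κ·u₁` for `n = 2, …, N−1`; for full resilience `κ = 1` all trades
equal `X₀/N`. -/
theorem u_shape_obizhaeva_wang
    (N : ℕ) (hN : 3 ≤ N)
    (η κ ν : ℝ) (hη : 0 < η) (hκ0 : 0 < κ) (hκ1 : κ ≤ 1) (hν0 : ν = 0)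
    (X₀ d₀ : ℝ) (hX₀ : 0 < X₀) (hd₀ : d₀ = 0)
    (a b c : ℕ → ℝ)
    (haN : a N = η / 2) (hbN : b N = 1 - κ) (hcN : c N = 0)
    (hrec : ∀ n, 1 ≤ n → n < N →
      a n = ν + a (n + 1) - (2 * ν + 2 * a (n + 1) - η * b (n + 1)) ^ 2 /
          (2 * η + 4 * ν + 4 * a (n + 1) - 4 * η * b (n + 1) + 4 * η ^ 2 * c (n + 1)) ∧
      b n = (1 - κ) * b (n + 1) +
          2 * (1 - κ) * (2 * ν + 2 * a (n + 1) - η * b (n + 1)) *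
            (1 - b (n + 1) + 2 * η * c (n + 1)) /
          (2 * η + 4 * ν + 4 * a (n + 1) - 4 * η * b (n + 1) + 4 * η ^ 2 * c (n + 1)) ∧
      c n = (1 - κ) ^ 2 * c (n + 1) -
          (1 - κ) ^ 2 * (1 - b (n + 1) + 2 * η * c (n + 1)) ^ 2 /
          (2 * η + 4 * ν + 4 * a (n + 1) - 4 * η * b (n + 1) + 4 * η ^ 2 * c (n + 1)))
    (u X D : ℕ → ℝ)
    (hX0 : X 0 = X₀) (hD0 : D 0 = d₀)
    (hu : ∀ n, 1 ≤ n → n ≤ N - 1 →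
      u n = ((2 * ν + 2 * a (n + 1) - η * b (n + 1)) * X (n - 1) -
          (1 - b (n + 1) + 2 * η * c (n + 1)) * (1 - κ) * D (n - 1)) /
        (η + 2 * ν + 2 * a (n + 1) - 2 * η * b (n + 1) + 2 * η ^ 2 * c (n + 1)))
    (huN : u N = X (N - 1))
    (hXrec : ∀ n, 1 ≤ n → n ≤ N → X n = X (n - 1) - u n)
    (hDrec : ∀ n, 1 ≤ n → n ≤ N → D n = (1 - κ) * D (n - 1) + η * u n)
    :
    u 1 = X₀ / (2 + ((N : ℝ) - 2) * κ) ∧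
      u N = u 1 ∧
      (∀ n, 2 ≤ n → n ≤ N - 1 → u n = κ * u 1) ∧
      (κ = 1 → ∀ n, 1 ≤ n → n ≤ N → u n = X₀ / N) := by

  subst hν0 hd₀
  have hκ2 : (0:ℝ) < 2 - κ := by linarith
  have hηne : η ≠ 0 := ne_of_gt hη
  have hκne : κ ≠ 0 := ne_of_gt hκ0
  have hκ2ne : (2 - κ) ≠ 0 := ne_of_gt hκ2
  have hNR : (3:ℝ) ≤ (N:ℝ) := by exact_mod_cast hN
  have hppos : ∀ m : ℝ, 0 ≤ m → 0 < 2 - κ + κ * m := by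
    intro m hm
    have := mul_nonneg hκ0.le hm
    linarith
  have hqpos : ∀ m : ℝ, 0 ≤ m → 0 < κ * m + 2 := by
    intro m hm
    have := mul_nonneg hκ0.le hm
    linarith
  -- closed forms for a, b, c by backward induction
  have key : ∀ k : ℕ, k ≤ N - 1 →
      a (N - k) = η * (2 - κ) / (2 * (2 - κ + κ * (k:ℝ))) ∧
      b (N - k) = (1 - κ) * (2 - κ) / (2 - κ + κ * (k:ℝ)) ∧
      c (N - k) = -(κ * (1 - κ) ^ 2 * (k:ℝ)) / (2 * η * (2 - κ + κ * (k:ℝ))) := by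
    intro k
    induction k with
    | zero =>
      intro _
      simp only [Nat.sub_zero, Nat.cast_zero, mul_zero, add_zero]
      refine ⟨?_, ?_, ?_⟩
      · rw [haN]; field_simp
      · rw [hbN]; field_simp
      · rw [hcN]; simp
    | succ k ih =>
      intro hk
      obtain ⟨ha1, hb1, hc1⟩ := ih (by omega)
      have hn1 : N - (k + 1) + 1 = N - k := by omega
      obtain ⟨hA, hB, hC⟩ := hrec (N - (k + 1)) (by omega) (by omega)
      rw [hn1, ha1, hb1, hc1] at hA hB hC
      have hkR : (0:ℝ) ≤ (k:ℝ) := Nat.cast_nonneg k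
      have hp : (0:ℝ) < 2 - κ + κ * (k:ℝ) := hppos _ hkR
      have hq : (0:ℝ) < κ * (k:ℝ) + 2 := hqpos _ hkR
      have hQ : 2 * η + 4 * 0 + 4 * (η * (2 - κ) / (2 * (2 - κ + κ * (k:ℝ)))) -
            4 * η * ((1 - κ) * (2 - κ) / (2 - κ + κ * (k:ℝ))) +
            4 * η ^ 2 * (-(κ * (1 - κ) ^ 2 * (k:ℝ)) / (2 * η * (2 - κ + κ * (k:ℝ)))) =
          2 * η * κ * (2 - κ) * (κ * (k:ℝ) + 2) / (2 - κ + κ * (k:ℝ)) := by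
        field_simp
        ring
      rw [hQ] at hA hB hC
      push_cast
      refine ⟨?_, ?_, ?_⟩
      · rw [hA]; field_simp; ring
      · rw [hB]; field_simp; ring
      · rw [hC]; field_simp; ring
  have habc : ∀ n : ℕ, 1 ≤ n → n ≤ N →
      a n = η * (2 - κ) / (2 * (2 - κ + κ * ((N:ℝ) - n))) ∧
      b n = (1 - κ) * (2 - κ) / (2 - κ + κ * ((N:ℝ) - n)) ∧
      c n = -(κ * (1 - κ) ^ 2 * ((N:ℝ) - n)) / (2 * η * (2 - κ + κ * ((N:ℝ) - n))) := by
    intro n h1 h2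
    have h3 : N - (N - n) = n := by omega
    have h4 : ((N - n : ℕ) : ℝ) = (N:ℝ) - n := by
      push_cast [Nat.cast_sub h2]
      ring
    have := key (N - n) (by omega)
    rw [h3, h4] at this
    exact this
  -- the candidate first trade
  obtain ⟨u1, hu1def⟩ : ∃ r : ℝ, r = X₀ / (2 + ((N:ℝ) - 2) * κ) := ⟨_, rfl⟩
  have hdenpos : (0:ℝ) < 2 + ((N:ℝ) - 2) * κ := by
    have := mul_nonneg (by linarith : (0:ℝ) ≤ (N:ℝ) - 2) hκ0.le
    linarith
  have hX₀eq : X₀ = u1 * (2 + ((N:ℝ) - 2) * κ) := by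
    rw [hu1def]
    field_simp
  -- forward induction on the trades
  have claim : ∀ n, 1 ≤ n → n ≤ N - 1 →
      (u n = if n = 1 then u1 else κ * u1) ∧
      X n = u1 * (1 + κ * ((N:ℝ) - 1 - n)) ∧
      D n = η * u1 := by
    intro n h1
    induction n, h1 using Nat.le_induction with
    | base =>
      intro _
      obtain ⟨ha2, hb2, hc2⟩ := habc 2 (by omega) (by omega)
      have h12 : (1:ℕ) + 1 = 2 := rfl
      have hU := hu 1 le_rfl (by omega)
      rw [h12, ha2, hb2, hc2] at hU
      have hX00 : X (1 - 1) = X₀ := hX0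
      have hD00 : D (1 - 1) = 0 := hD0
      rw [hX00, hD00] at hU
      have hmR : (0:ℝ) ≤ (N:ℝ) - 2 := by linarith
      have hp : (0:ℝ) < 2 - κ + κ * ((N:ℝ) - 2) := hppos _ hmR
      have hq : (0:ℝ) < κ * ((N:ℝ) - 2) + 2 := hqpos _ hmR
      have hR : η + 2 * 0 + 2 * (η * (2 - κ) / (2 * (2 - κ + κ * ((N:ℝ) - 2)))) -
            2 * η * ((1 - κ) * (2 - κ) / (2 - κ + κ * ((N:ℝ) - 2))) +
            2 * η ^ 2 * (-(κ * (1 - κ) ^ 2 * ((N:ℝ) - 2)) / (2 * η * (2 - κ + κ * ((N:ℝ) - 2)))) =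
          η * κ * (2 - κ) * (κ * ((N:ℝ) - 2) + 2) / (2 - κ + κ * ((N:ℝ) - 2)) := by
        field_simp
        ring
      push_cast at hU
      rw [hR] at hU
      have hu1v : u 1 = u1 := by
        rw [hU, hu1def]
        field_simp
        ring
      refine ⟨by rw [if_pos rfl]; exact hu1v, ?_, ?_⟩
      · have := hXrec 1 le_rfl (by omega)
        rw [this, hX00, hu1v, hX₀eq]
        push_cast
        ring
      · have := hDrec 1 le_rfl (by omega)
        rw [this, hD00, hu1v]
        push_cast
        ring
    | succ n hn ih =>
      intro hle
      obtain ⟨hun, hXn, hDn⟩ := ih (by omega)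
      obtain ⟨ha2, hb2, hc2⟩ := habc (n + 2) (by omega) (by omega)
      have hU := hu (n + 1) (by omega) hle
      have h12 : n + 1 + 1 = n + 2 := rfl
      have h11 : n + 1 - 1 = n := rfl
      rw [h12, h11, ha2, hb2, hc2, hXn, hDn] at hU
      push_cast at hU
      have hmR : (0:ℝ) ≤ (N:ℝ) - ((n:ℝ) + 2) := by
        have : ((n:ℝ) + 2) ≤ (N:ℝ) := by exact_mod_cast (by omega : n + 2 ≤ N)
        linarith
      have hp : (0:ℝ) < 2 - κ + κ * ((N:ℝ) - ((n:ℝ) + 2)) := hppos _ hmR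
      have hq : (0:ℝ) < κ * ((N:ℝ) - ((n:ℝ) + 2)) + 2 := hqpos _ hmR
      have hR : η + 2 * 0 + 2 * (η * (2 - κ) / (2 * (2 - κ + κ * ((N:ℝ) - ((n:ℝ) + 2))))) -
            2 * η * ((1 - κ) * (2 - κ) / (2 - κ + κ * ((N:ℝ) - ((n:ℝ) + 2)))) +
            2 * η ^ 2 * (-(κ * (1 - κ) ^ 2 * ((N:ℝ) - ((n:ℝ) + 2))) /
              (2 * η * (2 - κ + κ * ((N:ℝ) - ((n:ℝ) + 2))))) =
          η * κ * (2 - κ) * (κ * ((N:ℝ) - ((n:ℝ) + 2)) + 2) / (2 - κ + κ * ((N:ℝ) - ((n:ℝ) + 2))) := by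
        field_simp
        ring
      rw [hR] at hU
      have huv : u (n + 1) = κ * u1 := by
        rw [hU]
        field_simp
        ring
      refine ⟨by rw [if_neg (by omega : ¬ n + 1 = 1)] at *; exact huv, ?_, ?_⟩
      · have := hXrec (n + 1) (by omega) (by omega)
        rw [h11] at this
        rw [this, hXn, huv]
        push_cast
        ring
      · have := hDrec (n + 1) (by omega) (by omega)
        rw [h11] at this
        rw [this, hDn, huv]
        push_cast
        ring
  have hu1v : u 1 = u1 := by
    have := (claim 1 le_rfl (by omega)).1
    simpa using this
  have hNm1 : ((N - 1 : ℕ) : ℝ) = (N:ℝ) - 1 := by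
    push_cast [Nat.cast_sub (by omega : 1 ≤ N)]
    ring
  have huNv : u N = u1 := by
    rw [huN, (claim (N - 1) (by omega) le_rfl).2.1, hNm1]
    ring
  refine ⟨by rw [hu1v, hu1def], by rw [huNv, hu1v], ?_, ?_⟩
  · intro n h2 hle
    have := (claim n (by omega) hle).1
    rw [this, if_neg (by omega), hu1v]
  · intro hκe n h1 hle
    subst hκe
    have hu1N : u1 = X₀ / (N:ℝ) := by
      rw [hu1def]
      norm_num
    rcases eq_or_lt_of_le h1 with h | h
    · rw [← h, hu1v, hu1N]
    rcases eq_or_lt_of_le hle with h' | h'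
    · rw [h', huNv, hu1N]
    have := (claim n (by omega) (by omega)).1
    rw [this, if_neg (by omega), hu1N]
    ring
end

section
/- Fix N ≥ 2, η > 0, κ ∈ (0,1], ν ≥ 0. Then for every n = 2,...,N, the quantity Q_n := 2η + 4ν + 4a_n − 4ηb_n + 4η²c_n is strictly positive, where (a_n, b_n, c_n) are defined by the backward recursion. -/
private lemma denominator_pos_step (η κ ν a' b' c' an bn cn : ℝ)
    (hη : 0 < η) (hκ0 : 0 < κ) (hκ1 : κ ≤ 1) (hν : 0 ≤ ν)
    (hA' : 0 ≤ 2 * ν + 2 * a' - η * b')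
    (hB' : κ ≤ 1 - b' + 2 * η * c')
    (hb' : 0 ≤ b') (hc' : c' ≤ 0)
    (ha : an = ν + a' - (2 * ν + 2 * a' - η * b') ^ 2 /
          (2 * η + 4 * ν + 4 * a' - 4 * η * b' + 4 * η ^ 2 * c'))
    (hb : bn = (1 - κ) * b' +
          2 * (1 - κ) * (2 * ν + 2 * a' - η * b') * (1 - b' + 2 * η * c') /
          (2 * η + 4 * ν + 4 * a' - 4 * η * b' + 4 * η ^ 2 * c'))
    (hc : cn = (1 - κ) ^ 2 * c' -
          (1 - κ) ^ 2 * (1 - b' + 2 * η * c') ^ 2 /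
          (2 * η + 4 * ν + 4 * a' - 4 * η * b' + 4 * η ^ 2 * c')) :
    0 ≤ 2 * ν + 2 * an - η * bn ∧ κ ≤ 1 - bn + 2 * η * cn ∧
      0 ≤ bn ∧ cn ≤ 0 := by
  have hlam0 : 0 ≤ 1 - κ := by linarith
  set A := 2 * ν + 2 * a' - η * b' with hAdef
  set B := 1 - b' + 2 * η * c' with hBdef
  have hB0 : 0 ≤ B := le_trans hκ0.le hB'
  set Q := 2 * η + 4 * ν + 4 * a' - 4 * η * b' + 4 * η ^ 2 * c' with hQdef
  have hQeq : Q = 2 * A + 2 * η * B := by rw [hQdef, hAdef, hBdef]; ring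
  have hQpos : 0 < Q := by rw [hQeq]; nlinarith
  set q := 1 / Q with hq
  have hQq : Q * q = 1 := by rw [hq]; exact mul_one_div_cancel hQpos.ne'
  have hq0 : 0 ≤ q := by positivity
  have ha2 : an = ν + a' - A ^ 2 * q := by rw [ha, hq]; ring
  have hb2 : bn = (1 - κ) * b' + 2 * (1 - κ) * A * B * q := by rw [hb, hq]; ring
  have hc2 : cn = (1 - κ) ^ 2 * c' - (1 - κ) ^ 2 * B ^ 2 * q := by rw [hc, hq]; ring
  have hb'eq : b' = 1 - B + 2 * η * c' := by rw [hBdef]; ring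
  clear_value A B Q q
  clear ha hb hc hq hQdef
  refine ⟨?_, ?_, ?_, ?_⟩
  · rw [ha2, hb2]
    have h1 : (2 * A ^ 2 + 2 * (1 - κ) * η * A * B) * q ≤ A := by
      calc (2 * A ^ 2 + 2 * (1 - κ) * η * A * B) * q
          ≤ (2 * A ^ 2 + 2 * η * A * B) * q := by
            apply mul_le_mul_of_nonneg_right _ hq0
            nlinarith [mul_nonneg (mul_nonneg (mul_nonneg hκ0.le hη.le) hA') hB0]
        _ = A * (Q * q) := by rw [hQeq]; ring
        _ = A := by rw [hQq, mul_one]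
    have hid : 2 * ν + 2 * (ν + a' - A ^ 2 * q) -
        η * ((1 - κ) * b' + 2 * (1 - κ) * A * B * q)
        = 2 * ν + η * κ * b' + A - (2 * A ^ 2 + 2 * (1 - κ) * η * A * B) * q := by
      rw [hAdef]; ring
    rw [hid]
    have h2 : 0 ≤ η * κ * b' := mul_nonneg (mul_nonneg hη.le hκ0.le) hb'
    linarith
  · rw [hb2, hc2]
    have h1 : (2 * (1 - κ) * A * B + 2 * (1 - κ) ^ 2 * η * B ^ 2) * q
        ≤ (1 - κ) * B := by
      calc (2 * (1 - κ) * A * B + 2 * (1 - κ) ^ 2 * η * B ^ 2) * q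
          ≤ ((1 - κ) * B * (2 * A + 2 * η * B)) * q := by
            apply mul_le_mul_of_nonneg_right _ hq0
            nlinarith [mul_nonneg (mul_nonneg (mul_nonneg (mul_nonneg hκ0.le hlam0) hη.le) hB0) hB0]
        _ = ((1 - κ) * B) * (Q * q) := by rw [hQeq]; ring
        _ = (1 - κ) * B := by rw [hQq, mul_one]
    have hid : 1 - ((1 - κ) * b' + 2 * (1 - κ) * A * B * q) +
        2 * η * ((1 - κ) ^ 2 * c' - (1 - κ) ^ 2 * B ^ 2 * q)
        = κ + (1 - κ) * B + 2 * η * (1 - κ) * κ * (-c') -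
          (2 * (1 - κ) * A * B + 2 * (1 - κ) ^ 2 * η * B ^ 2) * q := by
      rw [hb'eq]; ring
    rw [hid]
    have hnc : 0 ≤ -c' := by linarith
    have h2 : 0 ≤ 2 * η * (1 - κ) * κ * (-c') :=
      mul_nonneg (mul_nonneg (mul_nonneg (by linarith) hlam0) hκ0.le) hnc
    linarith
  · rw [hb2]
    have h3 : 0 ≤ 2 * (1 - κ) * A * B * q := by positivity
    nlinarith [mul_nonneg hlam0 hb']
  · rw [hc2]
    have h1 : (1 - κ) ^ 2 * c' ≤ 0 := mul_nonpos_of_nonneg_of_nonpos (by positivity) hc'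
    have h2 : 0 ≤ (1 - κ) ^ 2 * B ^ 2 * q := by positivity
    linarith

/-- **Positivity of the denominators in the backward recursion** (Lemma 6.1).
For the coefficients `(a n, b n, c n)` of the linear-quadratic value function,
defined backwards from `a N = η/2`, `b N = 1 − κ`, `c N = 0`, the quantity
`Q n = 2η + 4ν + 4 a n − 4η b n + 4η² c n` is strictly positive for all `n = 2, …, N`. -/
theorem denominator_pos
    (N : ℕ) (hN : 2 ≤ N)
    (η κ ν : ℝ) (hη : 0 < η) (hκ0 : 0 < κ) (hκ1 : κ ≤ 1) (hν : 0 ≤ ν)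
    (a b c : ℕ → ℝ)
    (haN : a N = η / 2) (hbN : b N = 1 - κ) (hcN : c N = 0)
    (hrec : ∀ n, 1 ≤ n → n < N →
      a n = ν + a (n + 1) - (2 * ν + 2 * a (n + 1) - η * b (n + 1)) ^ 2 /
          (2 * η + 4 * ν + 4 * a (n + 1) - 4 * η * b (n + 1) + 4 * η ^ 2 * c (n + 1)) ∧
      b n = (1 - κ) * b (n + 1) +
          2 * (1 - κ) * (2 * ν + 2 * a (n + 1) - η * b (n + 1)) *
            (1 - b (n + 1) + 2 * η * c (n + 1)) /
          (2 * η + 4 * ν + 4 * a (n + 1) - 4 * η * b (n + 1) + 4 * η ^ 2 * c (n + 1)) ∧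
      c n = (1 - κ) ^ 2 * c (n + 1) -
          (1 - κ) ^ 2 * (1 - b (n + 1) + 2 * η * c (n + 1)) ^ 2 /
          (2 * η + 4 * ν + 4 * a (n + 1) - 4 * η * b (n + 1) + 4 * η ^ 2 * c (n + 1))) :
    ∀ n, 2 ≤ n → n ≤ N →
      0 < 2 * η + 4 * ν + 4 * a n - 4 * η * b n + 4 * η ^ 2 * c n := by
  have key : ∀ d n, n + d = N → 1 ≤ n →
      0 ≤ 2 * ν + 2 * a n - η * b n ∧ κ ≤ 1 - b n + 2 * η * c n ∧
        0 ≤ b n ∧ c n ≤ 0 := by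
    intro d
    induction d with
    | zero =>
      intro n hn _
      simp only [Nat.add_zero] at hn
      subst hn
      rw [haN, hbN, hcN]
      refine ⟨by nlinarith, by nlinarith, by linarith, le_refl 0⟩
    | succ d ih =>
      intro n hn hn1
      have hlt : n < N := by omega
      obtain ⟨ha, hb, hc⟩ := hrec n hn1 hlt
      obtain ⟨hA', hB', hb', hc'⟩ := ih (n + 1) (by omega) (by omega)
      exact denominator_pos_step η κ ν (a (n+1)) (b (n+1)) (c (n+1))
        (a n) (b n) (c n) hη hκ0 hκ1 hν hA' hB' hb' hc' ha hb hc
  intro n hn2 hnN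
  obtain ⟨hA, hB, hb', hc'⟩ := key (N - n) n (by omega) (by omega)
  nlinarith
end

section
/- Fix η > 0, κ ∈ (0,1], ν ≥ 0, σ ≥ 0, and let a', b', c' ∈ ℝ satisfy Q' := 2η + 4ν + 4a' − 4ηb' + 4η²c' > 0. For x, d ∈ ℝ define f : ℝ → ℝ by f(u) = (1−κ)d·u + (η/2)u² + ν(x−u)² + a'(x−u)² + b'(x−u)((1−κ)d + ηu) + c'((1−κ)d + ηu)² + c'σ². Then f has a unique global minimizer u* = [(2ν + 2a' − ηb')x − (1 − b' + 2ηc')(1−κ)d]/(η + 2ν + 2a' − 2ηb' + 2η²c'), and the minimum value is f(u*) = a·x² + b·xd + c·d² + c'σ², where a = ν + a' − (2ν + 2a' − ηb')²/Q', b = (1−κ)b' + 2(1−κ)(2ν + 2a' − ηb')(1 − b' + 2ηc')/Q', and c = (1−κ)²c' − (1−κ)²(1 − b' + 2ηc')²/Q'. -/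
/-- **One-step minimization in the dynamic programming equation** (linear case `α = 1`).
The one-period cost plus quadratic continuation value has a unique global minimizer
`u*`, and the minimum value is again a quadratic form with the recursively
defined coefficients `a`, `b`, `c`, plus the noise constant `c'σ²`. -/
theorem one_step_dp_minimization
    (η κ ν σ : ℝ) (hη : 0 < η) (hκ0 : 0 < κ) (hκ1 : κ ≤ 1) (hν : 0 ≤ ν) (hσ : 0 ≤ σ)
    (a' b' c' : ℝ)
    (hQ' : 0 < 2 * η + 4 * ν + 4 * a' - 4 * η * b' + 4 * η ^ 2 * c')
    (x d : ℝ) (f : ℝ → ℝ)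
    (hf : ∀ u, f u = (1 - κ) * d * u + η / 2 * u ^ 2 + ν * (x - u) ^ 2 +
        a' * (x - u) ^ 2 + b' * (x - u) * ((1 - κ) * d + η * u) +
        c' * ((1 - κ) * d + η * u) ^ 2 + c' * σ ^ 2)
    (ustar : ℝ)
    (hustar : ustar = ((2 * ν + 2 * a' - η * b') * x -
        (1 - b' + 2 * η * c') * (1 - κ) * d) /
        (η + 2 * ν + 2 * a' - 2 * η * b' + 2 * η ^ 2 * c'))
    (a b c : ℝ)
    (ha : a = ν + a' - (2 * ν + 2 * a' - η * b') ^ 2 /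
        (2 * η + 4 * ν + 4 * a' - 4 * η * b' + 4 * η ^ 2 * c'))
    (hb : b = (1 - κ) * b' +
        2 * (1 - κ) * (2 * ν + 2 * a' - η * b') * (1 - b' + 2 * η * c') /
        (2 * η + 4 * ν + 4 * a' - 4 * η * b' + 4 * η ^ 2 * c'))
    (hc : c = (1 - κ) ^ 2 * c' - (1 - κ) ^ 2 * (1 - b' + 2 * η * c') ^ 2 /
        (2 * η + 4 * ν + 4 * a' - 4 * η * b' + 4 * η ^ 2 * c')) :
    (∀ u : ℝ, u ≠ ustar → f ustar < f u) ∧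
      f ustar = a * x ^ 2 + b * x * d + c * d ^ 2 + c' * σ ^ 2 := by
  set Q' : ℝ := 2 * η + 4 * ν + 4 * a' - 4 * η * b' + 4 * η ^ 2 * c' with hQ'def
  have hQ'ne : Q' ≠ 0 := ne_of_gt hQ'
  have hQne : η + 2 * ν + 2 * a' - 2 * η * b' + 2 * η ^ 2 * c' ≠ 0 := by
    intro h
    apply hQ'ne
    rw [hQ'def]; linarith
  have key : ∀ u : ℝ, f u = a * x ^ 2 + b * x * d + c * d ^ 2 + c' * σ ^ 2 +
      (Q' / 4) * (u - ustar) ^ 2 := by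
    intro u
    rw [hf, ha, hb, hc, hustar, hQ'def]
    rw [show (2 * η + 4 * ν + 4 * a' - 4 * η * b' + 4 * η ^ 2 * c') = 2 * (η + 2 * ν + 2 * a' - 2 * η * b' + 2 * η ^ 2 * c') by ring]
    generalize hQg : (η + 2 * ν + 2 * a' - 2 * η * b' + 2 * η ^ 2 * c') = Q at hQne ⊢
    field_simp
    rw [← hQg]
    ring
  have hmin : f ustar = a * x ^ 2 + b * x * d + c * d ^ 2 + c' * σ ^ 2 := by
    rw [key ustar]; ring
  refine ⟨fun u hu => ?_, hmin⟩
  rw [key u, hmin]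
  have hne : u - ustar ≠ 0 := sub_ne_zero_of_ne hu
  have h1 : 0 < (Q' / 4) * (u - ustar) ^ 2 :=
    mul_pos (by linarith) (by positivity)
  linarith
end

section
/- Fix N ≥ 4, η > 0, κ ∈ (0,1], ν ≥ 0 (so that the denominator 2κη − κ²η − 2κν + 2ν = κη(2−κ) + 2ν(1−κ) > 0), X₀ > 0, d₀ ∈ ℝ, α = 1, σ = 0. Let (u_n)_{n=1,...,N} be real numbers, and define X_n := X₀ − Σ_{j=1}^n u_j and D₀ := d₀, D_n := (1−κ)D_{n−1} + η u_n. Suppose there exists λ ∈ ℝ such that for every i = 1,...,N−1: λκ = κ(2−κ)(η u_i + (1−κ)D_{i−1}) − 2νκ Σ_{n=i+1}^N X_n − 2ν X_i (the first-order conditions of the Lagrangian for minimizing the execution cost under the constraint Σ_{n=1}^N u_n = X₀). Then the trades satisfy the linear recursion u_i = ã·u_{i−1} + b̃·D_{i−2} + c̃·X_{i−2} for all i = 2,...,N−1, where ã = κ(2κη − κ²η + 2ν)/(2κη − κ²η − 2κν + 2ν), b̃ = κ²(2 − 3κ + κ²)/(2κη − κ²η − 2κν + 2ν), c̃ = −2κν/(2κη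 − κ²η − 2κν + 2ν). -/
open Finset

/-- **First-order conditions imply the three-term recursion for the trades**
(deterministic linear problem, proof of Proposition 3.2): if the Lagrangian
stationarity conditions hold for `i = 1, …, N−1`, then the trades satisfy the
linear recursion `u_i = ã u_{i−1} + b̃ D_{i−2} + c̃ X_{i−2}` for `i = 2, …, N−1`. -/
theorem foc_implies_recursion
    (N : ℕ) (hN : 4 ≤ N)
    (η κ ν : ℝ) (hη : 0 < η) (hκ0 : 0 < κ) (hκ1 : κ ≤ 1) (hν : 0 ≤ ν)
    (X₀ d₀ : ℝ) (hX₀ : 0 < X₀)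
    (u X D : ℕ → ℝ)
    (hX : ∀ n, n ≤ N → X n = X₀ - ∑ j ∈ Finset.Icc 1 n, u j)
    (hD0 : D 0 = d₀)
    (hD : ∀ n, 1 ≤ n → n ≤ N → D n = (1 - κ) * D (n - 1) + η * u n)
    (lam : ℝ)
    (hFOC : ∀ i, 1 ≤ i → i ≤ N - 1 →
      lam * κ = κ * (2 - κ) * (η * u i + (1 - κ) * D (i - 1)) -
        2 * ν * κ * ∑ n ∈ Finset.Icc (i + 1) N, X n - 2 * ν * X i) :
    0 < 2 * κ * η - κ ^ 2 * η - 2 * κ * ν + 2 * ν ∧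
    ∀ i, 2 ≤ i → i ≤ N - 1 →
      u i = κ * (2 * κ * η - κ ^ 2 * η + 2 * ν) /
              (2 * κ * η - κ ^ 2 * η - 2 * κ * ν + 2 * ν) * u (i - 1) +
            κ ^ 2 * (2 - 3 * κ + κ ^ 2) /
              (2 * κ * η - κ ^ 2 * η - 2 * κ * ν + 2 * ν) * D (i - 2) +
            (-2 * κ * ν) /
              (2 * κ * η - κ ^ 2 * η - 2 * κ * ν + 2 * ν) * X (i - 2) := by
  have hd : 0 < 2 * κ * η - κ ^ 2 * η - 2 * κ * ν + 2 * ν := by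
    nlinarith [mul_nonneg hν (sub_nonneg.2 hκ1), mul_pos (mul_pos hκ0 hη) (by linarith : (0:ℝ) < 2 - κ)]
  refine ⟨hd, ?_⟩
  intro i hi2 hiN
  obtain ⟨k, rfl⟩ : ∃ k, i = k + 2 := ⟨i - 2, by omega⟩
  have hkN : k + 3 ≤ N := by omega
  -- step relations for X
  have hXstep : ∀ m, m + 1 ≤ N → X (m + 1) = X m - u (m + 1) := by
    intro m hm
    rw [hX (m + 1) hm, hX m (by omega), Finset.sum_Icc_succ_top (by omega)]
    ring
  have hX2 : X (k + 2) = X (k + 1) - u (k + 2) := hXstep (k + 1) (by omega)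
  have hX1 : X (k + 1) = X k - u (k + 1) := hXstep k (by omega)
  -- D step
  have hD1 : D (k + 1) = (1 - κ) * D k + η * u (k + 1) := by
    have := hD (k + 1) (by omega) (by omega)
    simpa using this
  -- sum splitting
  have hsum : ∑ n ∈ Finset.Icc (k + 2) N, X n
      = X (k + 2) + ∑ n ∈ Finset.Icc (k + 3) N, X n := by
    rw [Finset.Icc_eq_cons_Ioc (by omega : k + 2 ≤ N), Finset.sum_cons,
      ← Finset.Icc_add_one_left_eq_Ioc]
    rfl
  have e1 := hFOC (k + 2) (by omega) (by omega)
  have e2 := hFOC (k + 1) (by omega) (by omega)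
  simp only [show k + 2 - 1 = k + 1 from rfl, show k + 1 - 1 = k from rfl,
    show k + 2 - 2 = k from rfl, show k + 1 + 1 = k + 2 from rfl] at e1 e2 ⊢
  rw [hsum] at e2
  rw [hD1] at e1
  rw [hX2, hX1] at e1 e2
  have hd' : (2 * κ * η - κ ^ 2 * η - 2 * κ * ν + 2 * ν) ≠ 0 := ne_of_gt hd
  rw [div_mul_eq_mul_div, div_mul_eq_mul_div, div_mul_eq_mul_div, ← add_div,
    ← add_div, eq_div_iff hd']
  linear_combination (e2 - e1)
end
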